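/- For any system of weights α satisfying the normalization condition, and for any permutation π of N, the quantities pr^α_π(P) := Π_{i∈N} α_i(C_i^π, P_{[C_i^π]}) form a probability distribution over partitions P of N: Σ_{P∈𝒫} pr^α_π(P) = 1. -/

import Mathlib

open Finset

open scoped Classical

/-- A partition of the player set `Fin n`; following the paper's convention,
`∅` is a member of every partition. -/
def IsPartition {n : ℕ} (P : Finset (Finset (Fin n))) : Prop :=
  ∅ ∈ P ∧ ∀ a : Fin n, ∃! B : Finset (Fin n), B ∈ P ∧ a ∈ B

/-- The set `𝒫` of all partitions of `Fin n`. -/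
noncomputable def allPartitions (n : ℕ) : Finset (Finset (Finset (Fin n))) :=
  Finset.univ.filter IsPartition

/-- `C_i^π`: the set of players appearing after `i` in the ordering `π`. -/
def Cafter {n : ℕ} (π : Equiv.Perm (Fin n)) (i : Fin n) : Finset (Fin n) :=
  Finset.univ.filter fun j => π.symm i < π.symm j

/-- `P_{[S]}` : the partition obtained from `P` by merging all members of `S`
into a single coalition. -/
def pmerge {n : ℕ} (P : Finset (Finset (Fin n))) (S : Finset (Fin n)) :
    Finset (Finset (Fin n)) :=
  P.image (· \ S) ∪ {S}

/-- `τ_i^T(P)` : the partition obtained from `P` by transferring `i` from its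
coalition to the coalition `T` (taking `T = ∅` means that `i` forms a new
singleton coalition). -/
def moveTo {n : ℕ} (P : Finset (Finset (Fin n))) (i : Fin n) (T : Finset (Fin n)) :
    Finset (Finset (Fin n)) :=
  ((P.erase T).image fun B => B.erase i) ∪ {insert i T} ∪ {∅}

/-- A partition-function game: a real value for every (embedded) coalition. -/
abbrev Game (n : ℕ) := Finset (Fin n) → Finset (Finset (Fin n)) → ℝ

/-- A system of weights `α_i(S, P)` (meaningful for `i ∉ S`). -/
abbrev Weights (n : ℕ) := Fin n → Finset (Fin n) → Finset (Finset (Fin n)) → ℝ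

/-- The partition `{N, ∅}` in which the grand coalition is embedded. -/
def grandPart (n : ℕ) : Finset (Finset (Fin n)) := {Finset.univ, ∅}

/-- Normalization: for every embedded coalition `(S, P)` with `i ∈ S`,
`∑_{T ∈ P_{−S}} α_i(S_{−i}, τ_i^T(P)) = 1`. -/
def Normalized {n : ℕ} (w : Weights n) : Prop :=
  ∀ (i : Fin n) (S : Finset (Fin n)) (P : Finset (Finset (Fin n))),
    IsPartition P → S ∈ P → i ∈ S →
      ∑ T ∈ P.erase S, w i (S.erase i) (moveTo P i T) = 1

/-- Weights take values in `[0, 1]`. -/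
def InRange {n : ℕ} (w : Weights n) : Prop :=
  ∀ (i : Fin n) (S : Finset (Fin n)) (P : Finset (Finset (Fin n))),
    i ∉ S → 0 ≤ w i S P ∧ w i S P ≤ 1

/-- `pr^α_π(P) = ∏_{i ∈ N} α_i(C_i^π, P_{[C_i^π]})`. -/
noncomputable def pr {n : ℕ} (w : Weights n) (π : Equiv.Perm (Fin n))
    (P : Finset (Finset (Fin n))) : ℝ :=
  ∏ i : Fin n, w i (Cafter π i) (pmerge P (Cafter π i))

/-- The extended Shapley value `φ^α` (formula (1) of the paper). -/
noncomputable def esv {n : ℕ} (w : Weights n) (v : Game n) (i : Fin n) : ℝ :=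
  ((n.factorial : ℝ))⁻¹ * ∑ π : Equiv.Perm (Fin n), ∑ P ∈ allPartitions n,
    pr w π P *
      (v (insert i (Cafter π i)) (pmerge P (insert i (Cafter π i))) -
        v (Cafter π i) (pmerge P (Cafter π i)))

/-- The `α`-marginal contribution `[mc^α_i(v)](S, P)`. -/
noncomputable def mc {n : ℕ} (w : Weights n) (v : Game n) (i : Fin n)
    (S : Finset (Fin n)) (P : Finset (Finset (Fin n))) : ℝ :=
  ∑ T ∈ P.erase S, w i (S.erase i) (moveTo P i T) * (v S P - v (S.erase i) (moveTo P i T))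

/-- A genuine partition-function game: it vanishes off embedded coalitions
(and on the empty coalition). -/
def IsGame {n : ℕ} (v : Game n) : Prop :=
  ∀ S P, ¬ (IsPartition P ∧ S ∈ P ∧ S ≠ ∅) → v S P = 0

/-- The simple game `e^{(S₀, P₀)}`. -/
noncomputable def sgame {n : ℕ} (S₀ : Finset (Fin n)) (P₀ : Finset (Finset (Fin n))) :
    Game n :=
  fun S P => if S = S₀ ∧ P = P₀ then 1 else 0

/-- The permuted game `π(v)`, with `π(v)(S, P) = v(π(S), π(P))`. -/
def permGame {n : ℕ} (π : Equiv.Perm (Fin n)) (v : Game n) : Game n :=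
  fun S P => v (S.image π) (P.image (Finset.image π))


section Aux
variable {n : ℕ}

lemma mem_pmerge {P : Finset (Finset (Fin n))} {S A : Finset (Fin n)} :
    A ∈ pmerge P S ↔ (∃ B ∈ P, A = B \ S) ∨ A = S := by
  simp [pmerge, eq_comm]
  exact or_comm

lemma mem_moveTo {P : Finset (Finset (Fin n))} {i : Fin n} {T A : Finset (Fin n)} :
    A ∈ moveTo P i T ↔ (∃ B ∈ P, B ≠ T ∧ A = B.erase i) ∨ A = insert i T ∨ A = ∅ := by
  simp only [moveTo, mem_union, mem_image, mem_erase, mem_singleton]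
  constructor
  · rintro ((⟨B, ⟨hBT, hBP⟩, rfl⟩ | h) | h)
    · exact Or.inl ⟨B, hBP, hBT, rfl⟩
    · exact Or.inr (Or.inl h)
    · exact Or.inr (Or.inr h)
  · rintro (⟨B, hBP, hBT, rfl⟩ | h | h)
    · exact Or.inl (Or.inl ⟨B, ⟨hBT, hBP⟩, rfl⟩)
    · exact Or.inl (Or.inr h)
    · exact Or.inr h

lemma part_unique {P : Finset (Finset (Fin n))} (hP : IsPartition P)
    {B₁ B₂ : Finset (Fin n)} {a : Fin n} (h1 : B₁ ∈ P) (h2 : B₂ ∈ P)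
    (ha1 : a ∈ B₁) (ha2 : a ∈ B₂) : B₁ = B₂ := by
  obtain ⟨B, -, hu⟩ := hP.2 a
  rw [hu B₁ ⟨h1, ha1⟩, hu B₂ ⟨h2, ha2⟩]

lemma sdiff_absorb {S S' : Finset (Fin n)} (hss : S ⊆ S') (B : Finset (Fin n)) :
    (B \ S) \ S' = B \ S' := by
  ext a
  simp only [mem_sdiff]
  refine ⟨fun h => ⟨h.1.1, h.2⟩, fun h => ⟨⟨h.1, fun hs => h.2 (hss hs)⟩, h.2⟩⟩

lemma pmerge_pmerge {X : Finset (Finset (Fin n))} {S S' : Finset (Fin n)}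
    (h0 : ∅ ∈ X) (hss : S ⊆ S') : pmerge (pmerge X S) S' = pmerge X S' := by
  ext A
  simp only [mem_pmerge]
  constructor
  · rintro (⟨B, hB, rfl⟩ | rfl)
    · rcases hB with ⟨C, hC, rfl⟩ | rfl
      · exact Or.inl ⟨C, hC, sdiff_absorb hss C⟩
      · exact Or.inl ⟨∅, h0, by simp [Finset.sdiff_eq_empty_iff_subset.2 hss]⟩
    · exact Or.inr rfl
  · rintro (⟨B, hB, rfl⟩ | rfl)
    · exact Or.inl ⟨B \ S, Or.inl ⟨B, hB, rfl⟩, (sdiff_absorb hss B).symm⟩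
    · exact Or.inr rfl


lemma isPartition_pmerge {P : Finset (Finset (Fin n))} (hP : IsPartition P)
    (S : Finset (Fin n)) : IsPartition (pmerge P S) := by
  refine ⟨mem_pmerge.2 (Or.inl ⟨∅, hP.1, by simp⟩), fun a => ?_⟩
  by_cases haS : a ∈ S
  · refine ⟨S, ⟨mem_pmerge.2 (Or.inr rfl), haS⟩, ?_⟩
    rintro B ⟨hB, haB⟩
    rcases mem_pmerge.1 hB with ⟨C, hC, rfl⟩ | rfl
    · exact ((mem_sdiff.1 haB).2 haS).elim
    · rfl
  · obtain ⟨B₀, ⟨hB₀, haB₀⟩, hu⟩ := hP.2 a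
    refine ⟨B₀ \ S, ⟨mem_pmerge.2 (Or.inl ⟨B₀, hB₀, rfl⟩), mem_sdiff.2 ⟨haB₀, haS⟩⟩, ?_⟩
    rintro B ⟨hB, haB⟩
    rcases mem_pmerge.1 hB with ⟨C, hC, rfl⟩ | rfl
    · rw [hu C ⟨hC, (mem_sdiff.1 haB).1⟩]
    · exact (haS haB).elim

lemma pmerge_self {X : Finset (Finset (Fin n))} {D : Finset (Fin n)}
    (h0 : ∅ ∈ X) (hD : D ∈ X) (hdisj : ∀ B ∈ X, B ≠ D → ∀ a ∈ B, a ∉ D) :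
    pmerge X D = X := by
  ext A
  rw [mem_pmerge]
  constructor
  · rintro (⟨B, hB, rfl⟩ | rfl)
    · by_cases hBD : B = D
      · subst hBD; simpa using h0
      · rwa [Finset.sdiff_eq_self_iff_disjoint.2
          (Finset.disjoint_left.2 (hdisj B hB hBD))]
    · exact hD
  · intro hA
    by_cases hAD : A = D
    · exact Or.inr hAD
    · exact Or.inl ⟨A, hA, (Finset.sdiff_eq_self_iff_disjoint.2
        (Finset.disjoint_left.2 (hdisj A hA hAD))).symm⟩

lemma mem_of_fix {Q : Finset (Finset (Fin n))} {S : Finset (Fin n)}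
    (hfix : pmerge Q S = Q) : S ∈ Q := hfix ▸ mem_pmerge.2 (Or.inr rfl)

lemma disj_of_fix {Q : Finset (Finset (Fin n))} {S : Finset (Fin n)}
    (hfix : pmerge Q S = Q) {B : Finset (Fin n)} (hB : B ∈ Q) (hBS : B ≠ S) :
    ∀ a ∈ B, a ∉ S := by
  rw [← hfix] at hB
  rcases mem_pmerge.1 hB with ⟨C, hC, rfl⟩ | rfl
  · intro a ha
    exact (mem_sdiff.1 ha).2
  · exact (hBS rfl).elim

lemma pmerge_moveTo {Q : Finset (Finset (Fin n))} {S T : Finset (Fin n)} {i : Fin n}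
    (hP : IsPartition Q) (hS : S ∈ Q) (hi : i ∈ S) (hT : T ∈ Q.erase S) :
    pmerge (moveTo Q i T) S = Q := by
  obtain ⟨hTS, hTQ⟩ := mem_erase.1 hT
  have hTdisj : ∀ a ∈ T, a ∉ S := fun a ha has => hTS (part_unique hP hTQ hS ha has)
  ext A
  rw [mem_pmerge]
  constructor
  · rintro (⟨B', hB', rfl⟩ | rfl)
    · rcases mem_moveTo.1 hB' with ⟨C, hC, hCT, rfl⟩ | rfl | rfl
      · by_cases hCS : C = S
        · have h0 : (C.erase i) \ S = ∅ := by
            rw [hCS]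
            exact Finset.sdiff_eq_empty_iff_subset.2 (Finset.erase_subset _ _)
          rw [h0]; exact hP.1
        · have hidisj : ∀ a ∈ C, a ∉ S := fun a ha has =>
            hCS (part_unique hP hC hS ha has)
          have h1 : C.erase i = C := Finset.erase_eq_self.2 (fun h => hidisj i h hi)
          have h2 : C \ S = C := Finset.sdiff_eq_self_iff_disjoint.2
            (Finset.disjoint_left.2 hidisj)
          rw [h1, h2]; exact hC
      · have : (insert i T) \ S = T := by
          ext a
          simp only [mem_sdiff, mem_insert]
          constructor
          · rintro ⟨rfl | haT, haS⟩
            · exact (haS hi).elim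
            · exact haT
          · intro haT
            exact ⟨Or.inr haT, hTdisj a haT⟩
        rw [this]; exact hTQ
      · simpa using hP.1
    · exact hS
  · intro hA
    by_cases hAS : A = S
    · exact Or.inr hAS
    · have hAdisj : ∀ a ∈ A, a ∉ S := fun a ha has =>
        hAS (part_unique hP hA hS ha has)
      by_cases hAT : A = T
      · subst hAT
        refine Or.inl ⟨insert i A, mem_moveTo.2 (Or.inr (Or.inl rfl)), ?_⟩
        ext a
        simp only [mem_sdiff, mem_insert]
        constructor
        · intro ha
          exact ⟨Or.inr ha, hAdisj a ha⟩
        · rintro ⟨rfl | ha, haS⟩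
          · exact (haS hi).elim
          · exact ha
      · have h1 : A.erase i = A := Finset.erase_eq_self.2 (fun h => hAdisj i h hi)
        have h2 : A \ S = A := Finset.sdiff_eq_self_iff_disjoint.2
          (Finset.disjoint_left.2 hAdisj)
        exact Or.inl ⟨A.erase i, mem_moveTo.2 (Or.inl ⟨A, hA, hAT, rfl⟩), by rw [h1, h2]⟩

lemma isPartition_moveTo {Q : Finset (Finset (Fin n))} {S T : Finset (Fin n)} {i : Fin n}
    (hP : IsPartition Q) (hS : S ∈ Q) (hi : i ∈ S) (hT : T ∈ Q.erase S) :
    IsPartition (moveTo Q i T) := by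
  obtain ⟨hTS, hTQ⟩ := mem_erase.1 hT
  refine ⟨mem_moveTo.2 (Or.inr (Or.inr rfl)), fun a => ?_⟩
  by_cases hai : a = i
  · subst hai
    refine ⟨insert a T, ⟨mem_moveTo.2 (Or.inr (Or.inl rfl)), mem_insert_self a T⟩, ?_⟩
    rintro B ⟨hB, haB⟩
    rcases mem_moveTo.1 hB with ⟨C, hC, hCT, rfl⟩ | rfl | rfl
    · exact absurd haB (Finset.notMem_erase a C)
    · rfl
    · exact absurd haB (Finset.notMem_empty a)
  · obtain ⟨B₀, ⟨hB₀, haB₀⟩, hu⟩ := hP.2 a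
    by_cases hB₀T : B₀ = T
    · subst hB₀T
      refine ⟨insert i B₀, ⟨mem_moveTo.2 (Or.inr (Or.inl rfl)), mem_insert_of_mem haB₀⟩, ?_⟩
      rintro B ⟨hB, haB⟩
      rcases mem_moveTo.1 hB with ⟨C, hC, hCT, rfl⟩ | rfl | rfl
      · exact absurd (hu C ⟨hC, Finset.mem_of_mem_erase haB⟩) hCT
      · rfl
      · exact absurd haB (Finset.notMem_empty a)
    · refine ⟨B₀.erase i, ⟨mem_moveTo.2 (Or.inl ⟨B₀, hB₀, hB₀T, rfl⟩),
        Finset.mem_erase.2 ⟨hai, haB₀⟩⟩, ?_⟩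
      rintro B ⟨hB, haB⟩
      rcases mem_moveTo.1 hB with ⟨C, hC, hCT, rfl⟩ | rfl | rfl
      · rw [hu C ⟨hC, Finset.mem_of_mem_erase haB⟩]
      · rcases mem_insert.1 haB with h | h
        · exact absurd h hai
        · exact absurd (hu T ⟨hTQ, h⟩).symm hB₀T
      · exact absurd haB (Finset.notMem_empty a)

lemma moveTo_fix {Q : Finset (Finset (Fin n))} {S T : Finset (Fin n)} {i : Fin n}
    (hP : IsPartition Q) (hS : S ∈ Q) (hi : i ∈ S) (hT : T ∈ Q.erase S) :
    pmerge (moveTo Q i T) (S.erase i) = moveTo Q i T := by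
  obtain ⟨hTS, hTQ⟩ := mem_erase.1 hT
  apply pmerge_self (mem_moveTo.2 (Or.inr (Or.inr rfl)))
    (mem_moveTo.2 (Or.inl ⟨S, hS, fun h => hTS h.symm, rfl⟩))
  intro B hB hBD a haB haD
  rcases mem_moveTo.1 hB with ⟨C, hC, hCT, rfl⟩ | rfl | rfl
  · have haC : a ∈ C := Finset.mem_of_mem_erase haB
    have haS : a ∈ S := Finset.mem_of_mem_erase haD
    exact hBD (by rw [part_unique hP hC hS haC haS])
  · have haT : a ∈ T := by
      rcases mem_insert.1 haB with h | h
      · exact absurd (h ▸ haD) (Finset.notMem_erase i S)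
      · exact h
    exact hTS (part_unique hP hTQ hS haT (Finset.mem_of_mem_erase haD))
  · exact absurd haB (Finset.notMem_empty a)


lemma not_mem_T_of_erase {Q : Finset (Finset (Fin n))} {S T : Finset (Fin n)} {i : Fin n}
    (hP : IsPartition Q) (hS : S ∈ Q) (hi : i ∈ S) (hT : T ∈ Q.erase S) : i ∉ T := by
  obtain ⟨hTS, hTQ⟩ := mem_erase.1 hT
  exact fun h => hTS (part_unique hP hTQ hS h hi)

lemma moveTo_injective {Q₁ Q₂ : Finset (Finset (Fin n))} {S T₁ T₂ : Finset (Fin n)}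
    {i : Fin n}
    (h1 : IsPartition Q₁) (hS1 : pmerge Q₁ S = Q₁) (hi : i ∈ S) (hT1 : T₁ ∈ Q₁.erase S)
    (h2 : IsPartition Q₂) (hS2 : pmerge Q₂ S = Q₂) (hT2 : T₂ ∈ Q₂.erase S)
    (heq : moveTo Q₁ i T₁ = moveTo Q₂ i T₂) : Q₁ = Q₂ ∧ T₁ = T₂ := by
  have hSQ1 : S ∈ Q₁ := mem_of_fix hS1
  have hSQ2 : S ∈ Q₂ := mem_of_fix hS2
  have hQ : Q₁ = Q₂ := by
    rw [← pmerge_moveTo h1 hSQ1 hi hT1, heq, pmerge_moveTo h2 hSQ2 hi hT2]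
  refine ⟨hQ, ?_⟩
  have hpart := isPartition_moveTo h1 hSQ1 hi hT1
  have hm1 : insert i T₁ ∈ moveTo Q₁ i T₁ := mem_moveTo.2 (Or.inr (Or.inl rfl))
  have hm2 : insert i T₂ ∈ moveTo Q₁ i T₁ := by
    rw [heq]; exact mem_moveTo.2 (Or.inr (Or.inl rfl))
  have hins : insert i T₁ = insert i T₂ :=
    part_unique hpart hm1 hm2 (mem_insert_self i T₁) (mem_insert_self i T₂)
  have hiT1 : i ∉ T₁ := not_mem_T_of_erase h1 hSQ1 hi hT1
  have hiT2 : i ∉ T₂ := not_mem_T_of_erase h2 hSQ2 hi hT2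
  rw [← Finset.erase_insert hiT1, ← Finset.erase_insert hiT2, hins]

lemma moveTo_surj {Q' : Finset (Finset (Fin n))} {S : Finset (Fin n)} {i : Fin n}
    (hi : i ∈ S) (hQ' : IsPartition Q') (hfix : pmerge Q' (S.erase i) = Q') :
    ∃ T ∈ (pmerge Q' S).erase S, moveTo (pmerge Q' S) i T = Q' := by
  have hD : S.erase i ∈ Q' := mem_of_fix hfix
  obtain ⟨T', ⟨hT'Q, hiT'⟩, hu⟩ := hQ'.2 i
  have hT'D : T' ≠ S.erase i := fun h => (Finset.notMem_erase i S) (h ▸ hiT')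
  have hT'disj : ∀ a ∈ T', a ∉ S.erase i := disj_of_fix hfix hT'Q hT'D
  set T := T'.erase i with hTdef
  have hiT : i ∉ T := Finset.notMem_erase i T'
  have hTeq : T = T' \ S := by
    ext a
    simp only [hTdef, mem_erase, mem_sdiff]
    constructor
    · rintro ⟨hai, haT'⟩
      refine ⟨haT', fun haS => hT'disj a haT' (mem_erase.2 ⟨hai, haS⟩)⟩
    · rintro ⟨haT', haS⟩
      exact ⟨fun h => haS (h ▸ hi), haT'⟩
  have hTQ : T ∈ pmerge Q' S := mem_pmerge.2 (Or.inl ⟨T', hT'Q, hTeq⟩)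
  have hTS : T ≠ S := fun h => hiT (h ▸ hi)
  refine ⟨T, mem_erase.2 ⟨hTS, hTQ⟩, ?_⟩
  have hinsT : insert i T = T' := Finset.insert_erase hiT'
  ext A
  rw [mem_moveTo]
  constructor
  · rintro (⟨C, hC, hCT, rfl⟩ | rfl | rfl)
    · rcases mem_pmerge.1 hC with ⟨B', hB', rfl⟩ | rfl
      · by_cases hB'D : B' = S.erase i
        · have : (B' \ S).erase i = ∅ := by
            rw [hB'D]
            have : S.erase i \ S = ∅ :=
              Finset.sdiff_eq_empty_iff_subset.2 (Finset.erase_subset _ _)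
            rw [this, Finset.erase_empty]
          rw [this]; exact hQ'.1
        · have hdisj : ∀ a ∈ B', a ∉ S.erase i := disj_of_fix hfix hB' hB'D
          have hiB' : i ∉ B' := by
            intro h
            apply hCT
            rw [hu B' ⟨hB', h⟩]
            exact hTeq.symm
          have hBS : B' \ S = B' := by
            refine Finset.sdiff_eq_self_iff_disjoint.2 (Finset.disjoint_left.2 ?_)
            intro a ha has
            exact hdisj a ha (mem_erase.2 ⟨fun hai => hiB' (by rwa [hai] at ha), has⟩)
          rw [hBS, Finset.erase_eq_self.2 hiB']
          exact hB'
      · exact hD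
    · rw [hinsT]; exact hT'Q
    · exact hQ'.1
  · intro hA
    by_cases hA0 : A = ∅
    · exact Or.inr (Or.inr hA0)
    by_cases hAT' : A = T'
    · exact Or.inr (Or.inl (hAT' ▸ hinsT.symm ▸ rfl))
    by_cases hAD : A = S.erase i
    · refine Or.inl ⟨S, mem_pmerge.2 (Or.inr rfl), fun h => hTS h.symm, hAD⟩
    · have hiA : i ∉ A := fun h => hAT' (hu A ⟨hA, h⟩)
      have hdisj : ∀ a ∈ A, a ∉ S.erase i := disj_of_fix hfix hA hAD
      have hAS : A \ S = A := by
        apply Finset.sdiff_eq_self_iff_disjoint.2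
        apply Finset.disjoint_left.2
        intro a ha has
        exact hdisj a ha (mem_erase.2 ⟨fun hai => hiA (hai ▸ ha), has⟩)
      have hAQ : A ∈ pmerge Q' S := mem_pmerge.2 (Or.inl ⟨A, hA, hAS.symm⟩)
      have hAT : A ≠ T := by
        intro h
        obtain ⟨a, ha⟩ := Finset.nonempty_iff_ne_empty.2 hA0
        have ha' : a ∈ T'.erase i := by rw [← hTdef, ← h]; exact ha
        have haT' : a ∈ T' := Finset.mem_of_mem_erase ha'
        exact hAT' (part_unique hQ' hA hT'Q ha haT')
      exact Or.inl ⟨A, hAQ, hAT, (Finset.erase_eq_self.2 hiA).symm⟩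


def Spos (π : Equiv.Perm (Fin n)) (m : ℕ) : Finset (Fin n) :=
  Finset.univ.filter fun j => m ≤ (π.symm j : ℕ)

lemma key_induction (w : Weights n) (hnorm : Normalized w) (π : Equiv.Perm (Fin n)) :
    ∀ m : ℕ,
      ∑ Q ∈ (allPartitions n).filter (fun Q => pmerge Q (Spos π m) = Q),
        ∏ i ∈ Finset.univ.filter (fun i : Fin n => ((π.symm i : ℕ)) < m),
          w i (Cafter π i) (pmerge Q (Cafter π i)) = 1 := by
  intro m
  induction m with
  | zero =>
    have hS0 : Spos π 0 = Finset.univ := by simp [Spos]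
    have hgrand : IsPartition ({∅, Finset.univ} : Finset (Finset (Fin n))) := by
      refine ⟨mem_insert_self _ _, fun a => ⟨Finset.univ, ⟨by simp, mem_univ a⟩, ?_⟩⟩
      rintro B ⟨hB, haB⟩
      rcases mem_insert.1 hB with rfl | h
      · exact absurd haB (notMem_empty a)
      · exact mem_singleton.1 h
    have hmerge : ∀ Q : Finset (Finset (Fin n)), IsPartition Q →
        pmerge Q Finset.univ = {∅, Finset.univ} := by
      intro Q hQ
      ext A
      rw [mem_pmerge]
      simp only [mem_insert, mem_singleton]
      constructor
      · rintro (⟨B, hB, rfl⟩ | rfl)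
        · exact Or.inl (Finset.sdiff_eq_empty_iff_subset.2 (subset_univ B))
        · exact Or.inr rfl
      · rintro (rfl | rfl)
        · exact Or.inl ⟨∅, hQ.1, by simp⟩
        · exact Or.inr rfl
    have hset : (allPartitions n).filter (fun Q => pmerge Q (Spos π 0) = Q)
        = {({∅, Finset.univ} : Finset (Finset (Fin n)))} := by
      ext Q
      simp only [mem_filter, mem_singleton, allPartitions, Finset.mem_univ, true_and, hS0]
      constructor
      · rintro ⟨hQ, hfix⟩
        rw [← hfix, hmerge Q hQ]
      · rintro rfl
        exact ⟨hgrand, hmerge _ hgrand⟩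
    rw [hset]
    simp
  | succ m ih =>
    by_cases hm : m < n
    · set i₀ := π ⟨m, hm⟩ with hi₀def
      have hpos : (π.symm i₀ : ℕ) = m := by simp [hi₀def]
      have hiS : i₀ ∈ Spos π m := by simp [Spos, hpos]
      have hSD : (Spos π m).erase i₀ = Spos π (m + 1) := by
        ext j
        simp only [Spos, mem_erase, mem_filter, mem_univ, true_and]
        constructor
        · rintro ⟨hne, hj⟩
          rcases Nat.lt_or_ge m ((π.symm j : ℕ)) with h | h
          · omega
          · exfalso
            apply hne
            have hval : ((π.symm j : ℕ)) = m := by omega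
            have hh : π.symm j = ⟨m, hm⟩ := by apply Fin.ext; simp [hval]
            calc j = π (π.symm j) := (π.apply_symm_apply j).symm
              _ = i₀ := by rw [hh]
        · intro hj
          refine ⟨fun h => ?_, by omega⟩
          rw [h] at hj
          omega
      have hCi₀ : Cafter π i₀ = Spos π (m + 1) := by
        ext j
        simp only [Cafter, Spos, mem_filter, mem_univ, true_and, Fin.lt_def, hpos]
        omega
      have hfins : (Finset.univ.filter (fun i : Fin n => ((π.symm i : ℕ)) < m + 1))
          = insert i₀ (Finset.univ.filter (fun i : Fin n => ((π.symm i : ℕ)) < m)) := by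
        ext j
        simp only [mem_filter, mem_univ, true_and, mem_insert]
        constructor
        · intro hj
          rcases Nat.lt_or_ge ((π.symm j : ℕ)) m with h | h
          · exact Or.inr h
          · left
            have hval : ((π.symm j : ℕ)) = m := by omega
            have hh : π.symm j = ⟨m, hm⟩ := by apply Fin.ext; simp [hval]
            calc j = π (π.symm j) := (π.apply_symm_apply j).symm
              _ = i₀ := by rw [hh]
        · rintro (h | h)
          · rw [h, hpos]; omega
          · omega
      have hi₀nf : i₀ ∉ Finset.univ.filter (fun i : Fin n => ((π.symm i : ℕ)) < m) := by
        simp [hpos]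
      rw [hfins]
      -- bijection step
      have hbij :
          ∑ Q ∈ (allPartitions n).filter (fun Q => pmerge Q (Spos π (m + 1)) = Q),
            ∏ i ∈ insert i₀ (Finset.univ.filter (fun i : Fin n => ((π.symm i : ℕ)) < m)),
              w i (Cafter π i) (pmerge Q (Cafter π i))
          = ∑ p ∈ ((allPartitions n).filter (fun Q => pmerge Q (Spos π m) = Q)).sigma
                (fun Q => Q.erase (Spos π m)),
              ∏ i ∈ insert i₀ (Finset.univ.filter (fun i : Fin n => ((π.symm i : ℕ)) < m)),
                w i (Cafter π i) (pmerge (moveTo p.1 i₀ p.2) (Cafter π i)) := by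
        refine (Finset.sum_bij (fun p _ => moveTo p.1 i₀ p.2) ?_ ?_ ?_ ?_).symm
        · rintro ⟨Q, T⟩ hp
          obtain ⟨hQmem, hT⟩ := Finset.mem_sigma.1 hp
          obtain ⟨hQall, hfixQ⟩ := Finset.mem_filter.1 hQmem
          have hQpart : IsPartition Q := (Finset.mem_filter.1 hQall).2
          have hSQ : Spos π m ∈ Q := mem_of_fix hfixQ
          refine Finset.mem_filter.2 ⟨?_, ?_⟩
          · exact Finset.mem_filter.2 ⟨Finset.mem_univ _,
              isPartition_moveTo hQpart hSQ hiS hT⟩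
          · rw [← hSD]
            exact moveTo_fix hQpart hSQ hiS hT
        · rintro ⟨Q₁, T₁⟩ h₁ ⟨Q₂, T₂⟩ h₂ heq
          obtain ⟨hQ₁mem, hT₁⟩ := Finset.mem_sigma.1 h₁
          obtain ⟨hQ₁all, hfix₁⟩ := Finset.mem_filter.1 hQ₁mem
          obtain ⟨hQ₂mem, hT₂⟩ := Finset.mem_sigma.1 h₂
          obtain ⟨hQ₂all, hfix₂⟩ := Finset.mem_filter.1 hQ₂mem
          obtain ⟨hQeq, hTeq⟩ := moveTo_injective ((Finset.mem_filter.1 hQ₁all).2) hfix₁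
            hiS hT₁ ((Finset.mem_filter.1 hQ₂all).2) hfix₂ hT₂ heq
          subst hQeq
          subst hTeq
          rfl
        · intro Q' hQ'mem
          obtain ⟨hQ'all, hfix'⟩ := Finset.mem_filter.1 hQ'mem
          have hQ'part : IsPartition Q' := (Finset.mem_filter.1 hQ'all).2
          have hfixD : pmerge Q' ((Spos π m).erase i₀) = Q' := by rw [hSD]; exact hfix'
          obtain ⟨T, hT, hmv⟩ := moveTo_surj hiS hQ'part hfixD
          refine ⟨⟨pmerge Q' (Spos π m), T⟩, ?_, hmv⟩
          refine Finset.mem_sigma.2 ⟨Finset.mem_filter.2 ⟨?_, ?_⟩, hT⟩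
          · exact Finset.mem_filter.2 ⟨Finset.mem_univ _, isPartition_pmerge hQ'part _⟩
          · exact pmerge_pmerge hQ'part.1 (Finset.Subset.refl _)
        · intro p hp
          rfl
      rw [hbij, Finset.sum_sigma]
      -- now reduce each inner sum
      have hinner : ∀ Q ∈ (allPartitions n).filter (fun Q => pmerge Q (Spos π m) = Q),
          ∑ T ∈ Q.erase (Spos π m),
            ∏ i ∈ insert i₀ (Finset.univ.filter (fun i : Fin n => ((π.symm i : ℕ)) < m)),
              w i (Cafter π i) (pmerge (moveTo Q i₀ T) (Cafter π i))
          = ∏ i ∈ Finset.univ.filter (fun i : Fin n => ((π.symm i : ℕ)) < m),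
              w i (Cafter π i) (pmerge Q (Cafter π i)) := by
        intro Q hQmem
        obtain ⟨hQall, hfixQ⟩ := Finset.mem_filter.1 hQmem
        have hQpart : IsPartition Q := (Finset.mem_filter.1 hQall).2
        have hSQ : Spos π m ∈ Q := mem_of_fix hfixQ
        have hterm : ∀ T ∈ Q.erase (Spos π m),
            ∏ i ∈ insert i₀ (Finset.univ.filter (fun i : Fin n => ((π.symm i : ℕ)) < m)),
              w i (Cafter π i) (pmerge (moveTo Q i₀ T) (Cafter π i))
            = w i₀ ((Spos π m).erase i₀) (moveTo Q i₀ T) *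
              ∏ i ∈ Finset.univ.filter (fun i : Fin n => ((π.symm i : ℕ)) < m),
                w i (Cafter π i) (pmerge Q (Cafter π i)) := by
          intro T hT
          rw [Finset.prod_insert hi₀nf]
          congr 1
          · rw [hCi₀, ← hSD, moveTo_fix hQpart hSQ hiS hT]
          · apply Finset.prod_congr rfl
            intro j hj
            have hjlt : ((π.symm j : ℕ)) < m := (Finset.mem_filter.1 hj).2
            have hsub : Spos π m ⊆ Cafter π j := by
              intro k hk
              have hk' : m ≤ ((π.symm k : ℕ)) := (Finset.mem_filter.1 hk).2
              simp only [Cafter, mem_filter, mem_univ, true_and, Fin.lt_def]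
              omega
            have h1 : pmerge (moveTo Q i₀ T) (Cafter π j)
                = pmerge (pmerge (moveTo Q i₀ T) (Spos π m)) (Cafter π j) :=
              (pmerge_pmerge (mem_moveTo.2 (Or.inr (Or.inr rfl))) hsub).symm
            rw [h1, pmerge_moveTo hQpart hSQ hiS hT]
        rw [Finset.sum_congr rfl hterm, ← Finset.sum_mul,
          hnorm i₀ (Spos π m) Q hQpart hSQ hiS, one_mul]
      rw [Finset.sum_congr rfl hinner]
      exact ih
    · push_neg at hm
      have h1 : Spos π (m + 1) = Spos π m := by
        ext j
        simp only [Spos, mem_filter, mem_univ, true_and]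
        have := (π.symm j).isLt
        omega
      have h2 : (Finset.univ.filter (fun i : Fin n => ((π.symm i : ℕ)) < m + 1))
          = Finset.univ.filter (fun i : Fin n => ((π.symm i : ℕ)) < m) := by
        ext j
        simp only [mem_filter, mem_univ, true_and]
        have := (π.symm j).isLt
        omega
      rw [h1, h2]
      exact ih

end Aux

/-- For any normalized weight system `α` and any permutation `π`, the numbers
`pr^α_π(P)` form a probability distribution over the partitions of `N`. -/
theorem stmt3 (n : ℕ) (w : Weights n) (hr : InRange w) (hnorm : Normalized w)
    (π : Equiv.Perm (Fin n)) :
    ∑ P ∈ allPartitions n, pr w π P = 1 := by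
  have h := key_induction w hnorm π n
  have h1 : Spos π n = (∅ : Finset (Fin n)) := by
    ext j
    simp only [Spos, mem_filter, mem_univ, true_and, Finset.notMem_empty, iff_false]
    have := (π.symm j).isLt
    omega
  have h2 : (Finset.univ.filter (fun i : Fin n => ((π.symm i : ℕ)) < n)) = Finset.univ := by
    ext j
    simp only [mem_filter, mem_univ, true_and, iff_true]
    exact (π.symm j).isLt
  rw [h1, h2] at h
  have h3 : (allPartitions n).filter
      (fun Q => pmerge Q (∅ : Finset (Fin n)) = Q) = allPartitions n := by
    apply Finset.filter_true_of_mem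
    intro Q hQ
    have hQp : IsPartition Q := (Finset.mem_filter.1 hQ).2
    exact pmerge_self hQp.1 hQp.1 (fun B _ _ a _ ha => Finset.notMem_empty a ha)
  rw [h3] at h
  simpa [pr] using h
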